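/- Let ω > 0 with ω ≠ 1, γ = 1/(1−ω²), σ ∈ ℝ. For any t₀ ∈ ℝ and any v₀ > 0, there exists t₁ > t₀ such that x(t₁; t₀, v₀) = σ, where x(t; t₀, v₀) = (σ − γ·cos(ωt₀))·cos(t−t₀) + (−v₀ + ωγ·sin(ωt₀))·sin(t−t₀) + γ·cos(ωt). In other words, every impact of the elastic impact oscillator is followed by another impact, so the impact map is defined everywhere. -/

import Mathlib

set_option maxHeartbeats 1000000

open Real

/-- Multiples of a small positive irrational number come within `δ` below `1`. -/
lemma impact_core {d δ : ℝ} (hirr : Irrational d) (hd : 0 < d) (hdδ : d < δ) (hδ1 : δ ≤ 1) :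
    ∃ N : ℕ, 1 ≤ N ∧ 1 - δ < N * d ∧ (N : ℝ) * d < 1 := by
  have hd1 : d < 1 := lt_of_lt_of_le hdδ hδ1
  have h1d : 1 < 1 / d := by rw [lt_div_iff₀ hd]; linarith
  have hfl : (1 : ℤ) ≤ ⌊1 / d⌋ := by
    exact_mod_cast Int.le_floor.mpr (by exact_mod_cast h1d.le)
  refine ⟨⌊1 / d⌋.toNat, ?_, ?_, ?_⟩
  · exact_mod_cast Int.toNat_le_toNat hfl
  · have h2 : 1 / d < ⌊1 / d⌋ + 1 := Int.lt_floor_add_one _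
    have h3 : 1 < (⌊1 / d⌋ + 1 : ℝ) * d := by
      calc (1 : ℝ) = (1 / d) * d := by field_simp
      _ < (⌊1 / d⌋ + 1) * d := by exact mul_lt_mul_of_pos_right h2 hd
    have : ((⌊1 / d⌋.toNat : ℕ) : ℝ) = (⌊1 / d⌋ : ℝ) := by
      exact_mod_cast Int.toNat_of_nonneg (by linarith : (0:ℤ) ≤ ⌊1 / d⌋)
    rw [this]; nlinarith
  · have hne : (⌊1 / d⌋ : ℝ) ≠ 1 / d := by
      intro h
      have : Irrational (1 / d) := by simpa [one_div] using hirr.inv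
      exact this.ne_int ⌊1 / d⌋ h.symm
    have h4 : (⌊1 / d⌋ : ℝ) < 1 / d := lt_of_le_of_ne (Int.floor_le _) hne
    have : ((⌊1 / d⌋.toNat : ℕ) : ℝ) = (⌊1 / d⌋ : ℝ) := by
      exact_mod_cast Int.toNat_of_nonneg (by linarith : (0:ℤ) ≤ ⌊1 / d⌋)
    rw [this]
    calc (⌊1 / d⌋ : ℝ) * d < (1 / d) * d := mul_lt_mul_of_pos_right h4 hd
    _ = 1 := by field_simp

/-- For irrational `ω`, positive integer multiples of `ω` come within `δ` of integers
from both sides. -/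
lemma impact_approx {ω : ℝ} (hω : Irrational ω) {δ : ℝ} (hδ : 0 < δ) (hδ1 : δ ≤ 1) :
    (∃ (j : ℕ) (m : ℤ), 1 ≤ j ∧ 0 < (j : ℝ) * ω - m ∧ (j : ℝ) * ω - m < δ) ∧
    (∃ (j : ℕ) (m : ℤ), 1 ≤ j ∧ 0 < (m : ℝ) - j * ω ∧ (m : ℝ) - j * ω < δ) := by
  obtain ⟨n, hn⟩ := exists_nat_gt (1 / δ)
  have hn0 : 0 < n := by
    rcases Nat.eq_zero_or_pos n with h | h
    · exfalso; subst h; norm_num at hn; linarith [one_div_pos.mpr hδ]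
    · exact h
  obtain ⟨m, k, hk0, hkn, hb⟩ := Real.exists_int_int_abs_mul_sub_le ω hn0
  have hbδ : |(k : ℝ) * ω - m| < δ := by
    have h1 : (1 : ℝ) / (n + 1) < δ := by
      rw [div_lt_iff₀ (by positivity)]
      have : 1 / δ < (n : ℝ) + 1 := by linarith
      calc (1 : ℝ) = δ * (1/δ) := by field_simp
      _ < δ * ((n:ℝ)+1) := by exact mul_lt_mul_of_pos_left this hδ
      _ = δ * (↑n + 1) := rfl
    linarith [hb]
  set d : ℝ := (k : ℝ) * ω - m with hd_def
  have hd_irr : Irrational d := (hω.intCast_mul (ne_of_gt hk0)).sub_intCast m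
  have hdne : d ≠ 0 := hd_irr.ne_zero
  set j₀ : ℕ := k.toNat with hj₀
  have hj₀1 : 1 ≤ j₀ := by omega
  have hj₀k : ((j₀ : ℕ) : ℝ) = (k : ℝ) := by exact_mod_cast Int.toNat_of_nonneg hk0.le
  rcases lt_or_gt_of_ne hdne with hneg | hpos
  · -- d < 0 : m - j₀ω = -d ∈ (0, δ)
    have he : 0 < (m : ℝ) - j₀ * ω ∧ (m : ℝ) - j₀ * ω < δ := by
      rw [hj₀k]
      constructor
      · linarith
      · have := abs_lt.mp hbδ; linarith
    set e : ℝ := (m : ℝ) - j₀ * ω with he_def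
    have he_irr : Irrational e := by
      have := ((hω.intCast_mul (ne_of_gt hk0)).sub_intCast m).neg
      rw [he_def, hj₀k]
      simpa [neg_sub] using this
    obtain ⟨N, hN1, hN2, hN3⟩ := impact_core he_irr he.1 he.2 hδ1
    constructor
    · refine ⟨N * j₀, N * m - 1, Nat.mul_pos hN1 hj₀1, ?_, ?_⟩
      · push_cast
        have : (N : ℝ) * j₀ * ω - (N * m - 1) = 1 - N * e := by rw [he_def]; ring
        rw [this]; linarith
      · push_cast
        have : (N : ℝ) * j₀ * ω - (N * m - 1) = 1 - N * e := by rw [he_def]; ring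
        rw [this]; linarith
    · exact ⟨j₀, m, hj₀1, he.1, he.2⟩
  · -- d > 0
    have hdδ : d < δ := by have := abs_lt.mp hbδ; linarith
    constructor
    · refine ⟨j₀, m, hj₀1, ?_, ?_⟩ <;> rw [hj₀k] <;> [exact hpos; exact hdδ]
    · obtain ⟨N, hN1, hN2, hN3⟩ := impact_core hd_irr hpos hdδ hδ1
      refine ⟨N * j₀, N * m + 1, Nat.mul_pos hN1 hj₀1, ?_, ?_⟩
      · push_cast
        have : ((N * m + 1 : ℝ)) - (N : ℝ) * j₀ * ω = 1 - N * d := by rw [hd_def, hj₀k]; ring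
        rw [this]; linarith
      · push_cast
        have : ((N * m + 1 : ℝ)) - (N : ℝ) * j₀ * ω = 1 - N * d := by rw [hd_def, hj₀k]; ring
        rw [this]; linarith

lemma impact_key_ineq {A B s : ℝ} (hB : 0 < B) (hs : 0 < s) (hs1 : s ≤ 1)
    (hsA : A * s ≤ B / 2) : 0 ≤ A * (Real.cos s - 1) + B * Real.sin s := by
  have hcos : 1 - s ^ 2 / 2 ≤ Real.cos s := Real.one_sub_sq_div_two_le_cos
  have hcos1 : Real.cos s ≤ 1 := Real.cos_le_one s
  have hsin : s / 2 ≤ Real.sin s := by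
    have := Real.sin_gt_sub_cube hs
    nlinarith
  rcases le_or_gt A 0 with hA | hA
  · have h1 : 0 ≤ A * (Real.cos s - 1) := by nlinarith
    have h2 : 0 ≤ B * Real.sin s := mul_nonneg hB.le (by linarith)
    linarith
  · nlinarith

lemma impact_cross {f : ℝ → ℝ} (hf : Continuous f) {σ t₀ a b : ℝ} (ha : t₀ < a) (hb : t₀ < b)
    (hfa : f a < σ) (hfb : σ ≤ f b) : ∃ t₁ > t₀, f t₁ = σ := by
  rcases le_total a b with hab | hab
  · have : σ ∈ Set.Icc (f a) (f b) := ⟨hfa.le, hfb⟩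
    obtain ⟨c, hc, hfc⟩ := intermediate_value_Icc hab hf.continuousOn this
    exact ⟨c, lt_of_lt_of_le ha hc.1, hfc⟩
  · have : σ ∈ Set.Icc (f a) (f b) := ⟨hfa.le, hfb⟩
    obtain ⟨c, hc, hfc⟩ := intermediate_value_Icc' hab hf.continuousOn this
    exact ⟨c, lt_of_lt_of_le hb hc.1, hfc⟩

/-- Every impact of the elastic impact oscillator is followed by another impact:
the free motion starting from the wall returns to the wall at some later time,
so the impact map is defined everywhere. -/
theorem impact_oscillator_next_impact_exists
    (ω σ γ t₀ v₀ : ℝ) (hω : 0 < ω) (hω1 : ω ≠ 1) (hγ : γ = 1 / (1 - ω ^ 2))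
    (hv₀ : 0 < v₀)
    (x : ℝ → ℝ)
    (hx : ∀ t, x t = (σ - γ * Real.cos (ω * t₀)) * Real.cos (t - t₀) +
      (-v₀ + ω * γ * Real.sin (ω * t₀)) * Real.sin (t - t₀) + γ * Real.cos (ω * t)) :
    ∃ t₁ > t₀, x t₁ = σ := by
  have hxfun : x = fun t => (σ - γ * Real.cos (ω * t₀)) * Real.cos (t - t₀) +
      (-v₀ + ω * γ * Real.sin (ω * t₀)) * Real.sin (t - t₀) + γ * Real.cos (ω * t) :=
    funext hx
  subst hxfun
  set A : ℝ := σ - γ * Real.cos (ω * t₀) with hA_def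
  set B : ℝ := -v₀ + ω * γ * Real.sin (ω * t₀) with hB_def
  set F : ℝ → ℝ := fun t => A * Real.cos (t - t₀) + B * Real.sin (t - t₀) + γ * Real.cos (ω * t)
    with hF_def
  have hπ : 0 < π := Real.pi_pos
  have hπ3 : (3 : ℝ) < π := Real.pi_gt_three
  have hπne : (π : ℝ) ≠ 0 := hπ.ne'
  have hωne : ω ≠ 0 := hω.ne'
  have hFc : Continuous F := by
    rw [hF_def]; fun_prop
  have hFt₀ : F t₀ = σ := by
    simp only [hF_def, sub_self, Real.cos_zero, Real.sin_zero, hA_def]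
    ring
  -- derivative at t₀ is -v₀ < 0
  have hd1 : HasDerivAt (fun t : ℝ => Real.cos (t - t₀)) 0 t₀ := by
    have h := ((hasDerivAt_id t₀).sub_const t₀).cos
    simpa using h
  have hd2 : HasDerivAt (fun t : ℝ => Real.sin (t - t₀)) 1 t₀ := by
    have h := ((hasDerivAt_id t₀).sub_const t₀).sin
    simpa using h
  have hd3 : HasDerivAt (fun t : ℝ => Real.cos (ω * t)) (-Real.sin (ω * t₀) * ω) t₀ := by
    have h := ((hasDerivAt_id t₀).const_mul ω).cos
    simpa using h
  have hder : HasDerivAt F (-v₀) t₀ := by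
    have h := ((hd1.const_mul A).add (hd2.const_mul B)).add (hd3.const_mul γ)
    have heq : A * 0 + B * 1 + γ * (-Real.sin (ω * t₀) * ω) = -v₀ := by
      rw [hB_def]; ring
    rw [hF_def, ← heq]
    exact h
  -- dip: a point t₂ > t₀ where F t₂ < σ
  have hslope := hasDerivAt_iff_tendsto_slope.mp hder
  have hev : ∀ᶠ t in nhdsWithin t₀ (Set.Ioi t₀), slope F t₀ t < 0 :=
    (hslope.eventually_lt_const (by linarith : -v₀ < 0)).filter_mono
      (nhdsWithin_mono t₀ (fun t ht => (Set.mem_Ioi.mp ht).ne'))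
  obtain ⟨t₂, ht₂mem, ht₂s⟩ := (eventually_mem_nhdsWithin.and hev).exists
  have ht₂ : t₀ < t₂ := Set.mem_Ioi.mp ht₂mem
  have hdip : F t₂ < σ := by
    rw [slope_def_field] at ht₂s
    have hnum : F t₂ - F t₀ < 0 := by
      by_contra hcon
      push_neg at hcon
      exact absurd (div_nonneg hcon (by linarith)) (not_le.mpr ht₂s)
    rw [hFt₀] at hnum
    linarith
  -- helper: evaluation when the phases line up
  have hval : ∀ (u : ℝ) (m : ℤ), ω * u = 2 * π * m →
      F (t₀ + u) = σ + A * (Real.cos u - 1) + B * Real.sin u := by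
    intro u m hm
    have h1 : ω * (t₀ + u) = ω * t₀ + (m : ℝ) * (2 * π) := by rw [mul_add, hm]; ring
    simp only [hF_def]
    rw [show t₀ + u - t₀ = u from by ring, h1, Real.cos_add_int_mul_two_pi, hA_def]
    ring
  by_cases hirr : Irrational ω
  · -- irrational case: find a point ≥ σ and use the IVT
    suffices hrise : ∃ u > 0, σ ≤ F (t₀ + u) by
      obtain ⟨u, hu, hrise⟩ := hrise
      exact impact_cross hFc ht₂ (by linarith) hdip hrise
    rcases lt_trichotomy B 0 with hB0 | hB0 | hB0
    · -- B < 0 : use u = 2πj - s with frac(jω) small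
      set K : ℝ := |A| + 1 with hK
      have hKpos : 0 < K := by rw [hK]; positivity
      have hKne : K ≠ 0 := hKpos.ne'
      have hM : 0 < min 1 ((-B) / (2 * K)) := lt_min one_pos (div_pos (by linarith) (by linarith))
      set δ : ℝ := min 1 (ω * min 1 ((-B) / (2 * K)) / (2 * π)) with hδ_def
      have hδpos : 0 < δ := by
        rw [hδ_def]
        exact lt_min one_pos (div_pos (mul_pos hω hM) (by linarith))
      obtain ⟨⟨j, m, hj, hd1', hd2'⟩, -⟩ := impact_approx hirr hδpos (min_le_left _ _)
      have hj1 : (1 : ℝ) ≤ (j : ℝ) := by exact_mod_cast hj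
      set d : ℝ := (j : ℝ) * ω - m with hd_def
      set s : ℝ := 2 * π * d / ω with hs_def
      have hs_pos : 0 < s := div_pos (mul_pos (by linarith) hd1') hω
      have hs_small : s < min 1 ((-B) / (2 * K)) := by
        rw [hs_def, div_lt_iff₀ hω]
        have h2 : d < ω * min 1 ((-B) / (2 * K)) / (2 * π) :=
          lt_of_lt_of_le hd2' (min_le_right _ _)
        calc 2 * π * d < 2 * π * (ω * min 1 ((-B) / (2 * K)) / (2 * π)) :=
              mul_lt_mul_of_pos_left h2 (by linarith)
          _ = min 1 ((-B) / (2 * K)) * ω := by field_simp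
      have hs1 : s ≤ 1 := le_of_lt (lt_of_lt_of_le hs_small (min_le_left _ _))
      refine ⟨2 * π * j - s, ?_, ?_⟩
      · have h6 : (2 * π) * 1 ≤ (2 * π) * (j : ℝ) := by
          exact mul_le_mul_of_nonneg_left hj1 (by linarith)
        linarith
      · have hphase : ω * (2 * π * j - s) = 2 * π * m := by
          rw [hs_def, hd_def]; field_simp; ring
        rw [hval _ m hphase]
        have hcos : Real.cos (2 * π * j - s) = Real.cos s := by
          have harg : 2 * π * (j:ℝ) - s = -s + ((j:ℤ) : ℝ) * (2 * π) := by push_cast; ring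
          rw [harg, Real.cos_add_int_mul_two_pi, Real.cos_neg]
        have hsin : Real.sin (2 * π * j - s) = -Real.sin s := by
          have harg : 2 * π * (j:ℝ) - s = -s + ((j:ℤ) : ℝ) * (2 * π) := by push_cast; ring
          rw [harg, Real.sin_add_int_mul_two_pi, Real.sin_neg]
        rw [hcos, hsin]
        have hAs : A * s ≤ (-B) / 2 := by
          have h1 : s ≤ (-B) / (2 * K) := le_of_lt (lt_of_lt_of_le hs_small (min_le_right _ _))
          have h2 : A * s ≤ |A| * s := mul_le_mul_of_nonneg_right (le_abs_self A) hs_pos.le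
          have h3 : |A| * s ≤ K * ((-B) / (2 * K)) :=
            mul_le_mul (by rw [hK]; linarith) h1 hs_pos.le hKpos.le
          have h4 : K * ((-B) / (2 * K)) = (-B) / 2 := by field_simp
          exact le_trans h2 (le_trans h3 (le_of_eq h4))
        have hkey := impact_key_ineq (A := A) (B := -B) (by linarith) hs_pos hs1 hAs
        nlinarith [hkey]
    · -- B = 0 : use u = 2πj with jω slightly below an integer
      have hprod : ω * (γ * Real.sin (ω * t₀)) = v₀ := by
        have h0 : -v₀ + ω * γ * Real.sin (ω * t₀) = 0 := by rw [← hB_def]; exact hB0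
        linear_combination h0
      have hcpos : 0 < γ * Real.sin (ω * t₀) := by
        by_contra h
        push_neg at h
        have h2 : ω * (γ * Real.sin (ω * t₀)) ≤ ω * 0 := mul_le_mul_of_nonneg_left h hω.le
        rw [mul_zero] at h2
        linarith
      set K : ℝ := |γ * Real.cos (ω * t₀)| + 1 with hK
      have hKpos : 0 < K := by rw [hK]; positivity
      have hKne : K ≠ 0 := hKpos.ne'
      have hM : 0 < min 1 ((γ * Real.sin (ω * t₀)) / (2 * K)) :=
        lt_min one_pos (div_pos hcpos (by linarith))
      set δ : ℝ := min 1 ((γ * Real.sin (ω * t₀)) / (2 * K)) / (2 * π) with hδ_def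
      have hδpos : 0 < δ := by
        rw [hδ_def]; exact div_pos hM (by linarith)
      have hδ1 : δ ≤ 1 := by
        rw [hδ_def, div_le_one (by linarith)]
        have h1 : min 1 ((γ * Real.sin (ω * t₀)) / (2 * K)) ≤ 1 := min_le_left _ _
        linarith
      obtain ⟨-, ⟨j, m, hj, he1, he2⟩⟩ := impact_approx hirr hδpos hδ1
      have hj1 : (1 : ℝ) ≤ (j : ℝ) := by exact_mod_cast hj
      set e : ℝ := (m : ℝ) - j * ω with he_def
      set φ : ℝ := 2 * π * e with hφ_def
      have hφpos : 0 < φ := mul_pos (by linarith) he1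
      have hφ_small : φ < min 1 ((γ * Real.sin (ω * t₀)) / (2 * K)) := by
        rw [hφ_def]
        calc 2 * π * e < 2 * π * δ := mul_lt_mul_of_pos_left he2 (by linarith)
          _ = min 1 ((γ * Real.sin (ω * t₀)) / (2 * K)) := by rw [hδ_def]; field_simp
      have hφ1 : φ ≤ 1 := le_of_lt (lt_of_lt_of_le hφ_small (min_le_left _ _))
      refine ⟨2 * π * j, ?_, ?_⟩
      · have h6 : (2 * π) * 1 ≤ (2 * π) * (j : ℝ) := mul_le_mul_of_nonneg_left hj1 (by linarith)
        linarith
      · have harg : ω * (t₀ + 2 * π * j) = (ω * t₀ - φ) + ((m : ℤ) : ℝ) * (2 * π) := by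
          rw [hφ_def, he_def]; push_cast; ring
        have hcos : Real.cos (t₀ + 2 * π * j - t₀) = 1 := by
          have harg2 : t₀ + 2 * π * (j:ℝ) - t₀ = ((j:ℤ) : ℝ) * (2 * π) := by push_cast; ring
          rw [harg2, Real.cos_int_mul_two_pi]
        have hsin : Real.sin (t₀ + 2 * π * j - t₀) = 0 := by
          have harg2 : t₀ + 2 * π * (j:ℝ) - t₀ = 0 + ((j:ℤ) : ℝ) * (2 * π) := by push_cast; ring
          rw [harg2, Real.sin_add_int_mul_two_pi, Real.sin_zero]
        have hAφ : (γ * Real.cos (ω * t₀)) * φ ≤ (γ * Real.sin (ω * t₀)) / 2 := by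
          have h1 : φ ≤ (γ * Real.sin (ω * t₀)) / (2 * K) :=
            le_of_lt (lt_of_lt_of_le hφ_small (min_le_right _ _))
          have h2 : (γ * Real.cos (ω * t₀)) * φ ≤ |γ * Real.cos (ω * t₀)| * φ :=
            mul_le_mul_of_nonneg_right (le_abs_self _) hφpos.le
          have h3 : |γ * Real.cos (ω * t₀)| * φ ≤ K * ((γ * Real.sin (ω * t₀)) / (2 * K)) :=
            mul_le_mul (by rw [hK]; linarith) h1 hφpos.le hKpos.le
          have h4 : K * ((γ * Real.sin (ω * t₀)) / (2 * K)) = (γ * Real.sin (ω * t₀)) / 2 := by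
            field_simp
          exact le_trans h2 (le_trans h3 (le_of_eq h4))
        have hkey := impact_key_ineq (A := γ * Real.cos (ω * t₀)) (B := γ * Real.sin (ω * t₀))
          hcpos hφpos hφ1 hAφ
        simp only [hF_def]
        rw [hcos, hsin, harg, Real.cos_add_int_mul_two_pi, Real.cos_sub, hA_def]
        nlinarith [hkey]
    · -- B > 0 : use u = 2πj + s with frac(jω) near 1
      set K : ℝ := |A| + 1 with hK
      have hKpos : 0 < K := by rw [hK]; positivity
      have hKne : K ≠ 0 := hKpos.ne'
      have hM : 0 < min 1 (B / (2 * K)) := lt_min one_pos (div_pos hB0 (by linarith))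
      set δ : ℝ := min 1 (ω * min 1 (B / (2 * K)) / (2 * π)) with hδ_def
      have hδpos : 0 < δ := by
        rw [hδ_def]
        exact lt_min one_pos (div_pos (mul_pos hω hM) (by linarith))
      obtain ⟨-, ⟨j, m, hj, he1, he2⟩⟩ := impact_approx hirr hδpos (min_le_left _ _)
      have hj1 : (1 : ℝ) ≤ (j : ℝ) := by exact_mod_cast hj
      set e : ℝ := (m : ℝ) - j * ω with he_def
      set s : ℝ := 2 * π * e / ω with hs_def
      have hs_pos : 0 < s := div_pos (mul_pos (by linarith) he1) hω
      have hs_small : s < min 1 (B / (2 * K)) := by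
        rw [hs_def, div_lt_iff₀ hω]
        have h2 : e < ω * min 1 (B / (2 * K)) / (2 * π) := lt_of_lt_of_le he2 (min_le_right _ _)
        calc 2 * π * e < 2 * π * (ω * min 1 (B / (2 * K)) / (2 * π)) :=
              mul_lt_mul_of_pos_left h2 (by linarith)
          _ = min 1 (B / (2 * K)) * ω := by field_simp
      have hs1 : s ≤ 1 := le_of_lt (lt_of_lt_of_le hs_small (min_le_left _ _))
      refine ⟨2 * π * j + s, ?_, ?_⟩
      · have h6 : (2 * π) * 1 ≤ (2 * π) * (j : ℝ) := mul_le_mul_of_nonneg_left hj1 (by linarith)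
        linarith
      · have hphase : ω * (2 * π * j + s) = 2 * π * m := by
          rw [hs_def, he_def]; field_simp; ring
        rw [hval _ m hphase]
        have hcos : Real.cos (2 * π * j + s) = Real.cos s := by
          have harg : 2 * π * (j:ℝ) + s = s + ((j:ℤ) : ℝ) * (2 * π) := by push_cast; ring
          rw [harg, Real.cos_add_int_mul_two_pi]
        have hsin : Real.sin (2 * π * j + s) = Real.sin s := by
          have harg : 2 * π * (j:ℝ) + s = s + ((j:ℤ) : ℝ) * (2 * π) := by push_cast; ring
          rw [harg, Real.sin_add_int_mul_two_pi]
        rw [hcos, hsin]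
        have hAs : A * s ≤ B / 2 := by
          have h1 : s ≤ B / (2 * K) := le_of_lt (lt_of_lt_of_le hs_small (min_le_right _ _))
          have h2 : A * s ≤ |A| * s := mul_le_mul_of_nonneg_right (le_abs_self A) hs_pos.le
          have h3 : |A| * s ≤ K * (B / (2 * K)) :=
            mul_le_mul (by rw [hK]; linarith) h1 hs_pos.le hKpos.le
          have h4 : K * (B / (2 * K)) = B / 2 := by field_simp
          exact le_trans h2 (le_trans h3 (le_of_eq h4))
        have hkey := impact_key_ineq (A := A) (B := B) hB0 hs_pos hs1 hAs
        linarith [hkey]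
  · -- rational case: exact return after a common period
    obtain ⟨r, hr⟩ := not_not.mp hirr
    have hden : (0 : ℝ) < (r.den : ℝ) := by exact_mod_cast r.pos
    have hdenq : ((r.den : ℚ)) ≠ 0 := by exact_mod_cast r.den_nz
    refine ⟨t₀ + 2 * π * r.den, ?_, ?_⟩
    · have h6 : 0 < (2 * π) * (r.den : ℝ) := mul_pos (by linarith) hden
      linarith
    · have hq : (r : ℝ) * (r.den : ℝ) = (r.num : ℝ) := by
        have h : (r * (r.den : ℚ)) = (r.num : ℚ) := by
          nth_rewrite 1 [← Rat.num_div_den r]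
          exact div_mul_cancel₀ _ hdenq
        exact_mod_cast h
      have hphase : ω * (2 * π * r.den) = 2 * π * ((r.num : ℤ) : ℝ) := by
        rw [← hr]
        push_cast
        linear_combination (2 * π) * hq
      rw [hval (2 * π * r.den) r.num hphase]
      have hcos : Real.cos (2 * π * r.den) = 1 := by
        have harg2 : 2 * π * (r.den : ℝ) = ((r.den : ℤ) : ℝ) * (2 * π) := by push_cast; ring
        rw [harg2, Real.cos_int_mul_two_pi]
      have hsin : Real.sin (2 * π * r.den) = 0 := by
        have harg2 : 2 * π * (r.den : ℝ) = 0 + ((r.den : ℤ) : ℝ) * (2 * π) := by push_cast; ring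
        rw [harg2, Real.sin_add_int_mul_two_pi, Real.sin_zero]
      rw [hcos, hsin]
      ring
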